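/- Let K be a compact Hausdorff space, V ⊆ K an open set, and a a real number. Then the set U = {μ ∈ M(K) : μ⁺(V) > a} of signed Radon measures whose positive part assigns measure greater than a to V is open in the weak* topology on M(K) = C(K)*. -/

import Mathlib

open MeasureTheory Topology
open Set

theorem key {K : Type*} [TopologicalSpace K] [CompactSpace K] [T2Space K]
    [MeasurableSpace K] [BorelSpace K] (V : Set K) (hV : IsOpen V) (a : ℝ)
    (p n : Measure K) [IsFiniteMeasure p] [IsFiniteMeasure n]
    (hp : p.Regular) (hn : n.Regular) (hsing : p ⟂ₘ n) :
    a < (p V).toReal ↔ ∃ f : C(K, ℝ), (∀ x, f x ∈ Icc (0:ℝ) 1) ∧ (∀ x ∉ V, f x = 0) ∧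
      a < (∫ x, f x ∂p) - ∫ x, f x ∂n := by
  haveI := hp; haveI := hn
  constructor
  · intro h
    obtain ⟨t, ht, hpt, hnt⟩ := hsing
    set δ := ((p V).toReal - a) / 2 with hδ
    have hδpos : 0 < δ := by rw [hδ]; linarith
    have hA : MeasurableSet (V \ t) := hV.measurableSet.diff ht
    have hpA : p (V \ t) = p V := by rw [measure_diff_null hpt]
    obtain ⟨C, hCA, hCc, hpC⟩ := hA.exists_isCompact_lt_add (measure_ne_top p _)
      (ε := ENNReal.ofReal δ) (ENNReal.ofReal_pos.mpr hδpos).ne'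
    have hnC : n C = 0 := measure_mono_null (fun x hx => (hCA hx).2) hnt
    obtain ⟨W, hCW, hWo, hnW⟩ := Set.exists_isOpen_lt_of_lt C (ENNReal.ofReal δ)
      (by rw [hnC]; exact ENNReal.ofReal_pos.mpr hδpos)
    obtain ⟨f, hf1, hf0, -, hficc⟩ := exists_continuous_one_zero_of_isCompact hCc
      (hWo.inter hV).isClosed_compl
      (disjoint_compl_right_iff_subset.mpr (subset_inter hCW (fun x hx => (hCA hx).1)))
    refine ⟨f, hficc, fun x hx => hf0 (fun h' => hx h'.2), ?_⟩
    have hfint_p : Integrable (fun x => f x) p := f.continuous.integrable_of_hasCompactSupport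
      (HasCompactSupport.of_compactSpace f)
    have hfint_n : Integrable (fun x => f x) n := f.continuous.integrable_of_hasCompactSupport
      (HasCompactSupport.of_compactSpace f)
    have hCm : MeasurableSet C := hCc.measurableSet
    have hWm : MeasurableSet W := hWo.measurableSet
    -- lower bound on ∫ f dp
    have h1 : (p C).toReal ≤ ∫ x, f x ∂p := by
      show p.real C ≤ _
      rw [← integral_indicator_one hCm]
      refine integral_mono ((integrable_const (1:ℝ)).indicator hCm) hfint_p (fun x => ?_)
      by_cases hx : x ∈ C
      · rw [Set.indicator_of_mem hx]; exact le_of_eq (hf1 hx).symm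
      · simpa [Set.indicator_of_notMem hx] using (hficc x).1
    -- upper bound on ∫ f dn
    have h2 : ∫ x, f x ∂n ≤ (n W).toReal := by
      show _ ≤ n.real W
      rw [← integral_indicator_one hWm]
      refine integral_mono hfint_n ((integrable_const (1:ℝ)).indicator hWm) (fun x => ?_)
      by_cases hx : x ∈ W
      · simpa [Set.indicator_of_mem hx] using (hficc x).2
      · have : x ∉ W ∩ V := fun h' => hx h'.1
        simp [Set.indicator_of_notMem hx, hf0 this]
    have h3 : (p V).toReal - δ ≤ (p C).toReal := by
      have := ENNReal.toReal_mono (by finiteness) (hpA ▸ hpC).le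
      rw [ENNReal.toReal_add (measure_ne_top p C) ENNReal.ofReal_ne_top,
        ENNReal.toReal_ofReal hδpos.le] at this
      linarith
    have h4 : (n W).toReal < δ := by
      rw [← ENNReal.toReal_ofReal hδpos.le]
      exact ENNReal.toReal_strict_mono ENNReal.ofReal_ne_top hnW
    have : a = (p V).toReal - 2 * δ := by rw [hδ]; ring
    linarith
  · rintro ⟨f, hficc, hf0, hlt⟩
    have hfint_p : Integrable (fun x => f x) p := f.continuous.integrable_of_hasCompactSupport
      (HasCompactSupport.of_compactSpace f)
    have hfint_n : Integrable (fun x => f x) n := f.continuous.integrable_of_hasCompactSupport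
      (HasCompactSupport.of_compactSpace f)
    have h1 : ∫ x, f x ∂p ≤ (p V).toReal := by
      show _ ≤ p.real V
      rw [← integral_indicator_one hV.measurableSet]
      refine integral_mono hfint_p ((integrable_const (1:ℝ)).indicator hV.measurableSet)
        (fun x => ?_)
      by_cases hx : x ∈ V
      · simpa [Set.indicator_of_mem hx] using (hficc x).2
      · simp [Set.indicator_of_notMem hx, hf0 x hx]
    have h2 : 0 ≤ ∫ x, f x ∂n := integral_nonneg (fun x => (hficc x).1)
    linarith

/-- For a compact Hausdorff space `K`, an open set `V ⊆ K` and `a : ℝ`,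
the set `{μ ∈ M(K) : μ⁺(V) > a}` of signed Radon measures (i.e. signed measures whose
Jordan decomposition parts are regular) is open in the weak* topology on `M(K) = C(K)*`,
i.e. in the topology induced by the pairing `μ ↦ (f ↦ ∫ f dμ⁺ - ∫ f dμ⁻)` with `C(K, ℝ)`. -/
theorem stmt0 {K : Type*} [TopologicalSpace K] [CompactSpace K] [T2Space K]
    [MeasurableSpace K] [BorelSpace K] (V : Set K) (hV : IsOpen V) (a : ℝ) :
    IsOpen[TopologicalSpace.induced
      (fun μ : {μ : SignedMeasure K //
          μ.toJordanDecomposition.posPart.Regular ∧ μ.toJordanDecomposition.negPart.Regular} =>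
        fun f : C(K, ℝ) =>
          (∫ x, f x ∂μ.1.toJordanDecomposition.posPart)
            - ∫ x, f x ∂μ.1.toJordanDecomposition.negPart)
      Pi.topologicalSpace]
      {μ : {μ : SignedMeasure K //
          μ.toJordanDecomposition.posPart.Regular ∧ μ.toJordanDecomposition.negPart.Regular} |
        a < (μ.1.toJordanDecomposition.posPart V).toReal} := by
  have hset : {μ : {μ : SignedMeasure K //
          μ.toJordanDecomposition.posPart.Regular ∧ μ.toJordanDecomposition.negPart.Regular} |
        a < (μ.1.toJordanDecomposition.posPart V).toReal}
      = ⋃ f : C(K, ℝ), ⋃ _h : (∀ x, f x ∈ Icc (0:ℝ) 1) ∧ (∀ x ∉ V, f x = 0),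
        (fun μ : {μ : SignedMeasure K //
          μ.toJordanDecomposition.posPart.Regular ∧ μ.toJordanDecomposition.negPart.Regular} =>
        fun f : C(K, ℝ) =>
          (∫ x, f x ∂μ.1.toJordanDecomposition.posPart)
            - ∫ x, f x ∂μ.1.toJordanDecomposition.negPart) ⁻¹' {g | a < g f} := by
    ext μ
    simp only [mem_setOf_eq, mem_iUnion, mem_preimage]
    rw [key V hV a _ _ μ.2.1 μ.2.2 μ.1.toJordanDecomposition.mutuallySingular]
    tauto
  letI : TopologicalSpace {μ : SignedMeasure K //
      μ.toJordanDecomposition.posPart.Regular ∧ μ.toJordanDecomposition.negPart.Regular} :=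
    TopologicalSpace.induced
      (fun μ : {μ : SignedMeasure K //
          μ.toJordanDecomposition.posPart.Regular ∧ μ.toJordanDecomposition.negPart.Regular} =>
        fun f : C(K, ℝ) =>
          (∫ x, f x ∂μ.1.toJordanDecomposition.posPart)
            - ∫ x, f x ∂μ.1.toJordanDecomposition.negPart)
      Pi.topologicalSpace
  rw [hset]
  exact isOpen_iUnion fun f => isOpen_iUnion fun _ =>
    isOpen_induced (isOpen_lt continuous_const (continuous_apply f))
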